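/- With $\mathcal{S}_\omega$, $\mathcal{K}$, and $\mathcal{J}_\omega$ as in the cubic-quintic setting, the two minimization problems coincide: $\inf\{\mathcal{S}_\omega(u) : u \in H^1(\mathbb{R}^3)\setminus\{0\},\ \mathcal{K}(u) = 0\} = \inf\{\mathcal{J}_\omega(u) : u \in H^1(\mathbb{R}^3)\setminus\{0\},\ \mathcal{K}(u) \le 0\}$. -/

import Mathlib

open MeasureTheory

noncomputable section

/-- Membership in `H¹(ℝ³)` (together with the `L⁴`, `L⁶` integrability that
follows from the Sobolev embedding). -/
def InH1 (u : EuclideanSpace ℝ (Fin 3) → ℂ) : Prop :=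
  MemLp u 2 volume ∧ Differentiable ℝ u ∧
    MemLp (fun x => ‖fderiv ℝ u x‖) 2 volume ∧
    MemLp u 4 volume ∧ MemLp u 6 volume

/-- `‖∇u‖₂²`. -/
def gradSq (u : EuclideanSpace ℝ (Fin 3) → ℂ) : ℝ :=
  (eLpNorm (fun x => ‖fderiv ℝ u x‖) 2 volume).toReal ^ 2

/-- The action `S_ω`. -/
def S (ω : ℝ) (u : EuclideanSpace ℝ (Fin 3) → ℂ) : ℝ :=
  (1 / 2) * gradSq u - (1 / 4) * (eLpNorm u 4 volume).toReal ^ 4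
    - (1 / 6) * (eLpNorm u 6 volume).toReal ^ 6
    + (ω / 2) * (eLpNorm u 2 volume).toReal ^ 2

/-- The virial functional `K`. -/
def K (u : EuclideanSpace ℝ (Fin 3) → ℂ) : ℝ :=
  gradSq u - (3 / 4) * (eLpNorm u 4 volume).toReal ^ 4
    - (eLpNorm u 6 volume).toReal ^ 6

/-- `J_ω = S_ω - (1/2) K`. -/
def J (ω : ℝ) (u : EuclideanSpace ℝ (Fin 3) → ℂ) : ℝ :=
  S ω u - (1 / 2) * K u


open ENNReal

private lemma aux_cons_eq (y : Fin 2 → ℝ) (t : ℝ) :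
    (Fin.cons t y : Fin 3 → ℝ)
      = (Fin.cons 0 y : Fin 3 → ℝ) + t • (Pi.single (0 : Fin 3) (1:ℝ) : Fin 3 → ℝ) := by
  funext i
  refine Fin.cases ?_ (fun j => ?_) i <;>
    simp [Pi.single_apply, Fin.succ_ne_zero]

private lemma aux_symm_eq (y : Fin 2 → ℝ) (t : ℝ) :
    (MeasurableEquiv.piFinSuccAbove (fun _ : Fin 3 => ℝ) 0).symm (t, y) = Fin.cons t y := by
  simp [MeasurableEquiv.piFinSuccAbove]; rfl

lemma ae_zero_of_grad_zero (u : EuclideanSpace ℝ (Fin 3) → ℂ)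
    (hd : Differentiable ℝ u)
    (hf : ∀ᵐ x ∂(volume : Measure (EuclideanSpace ℝ (Fin 3))), fderiv ℝ u x = 0)
    (hu : MemLp u 2 volume) :
    u =ᵐ[(volume : Measure (EuclideanSpace ℝ (Fin 3)))] (fun _ => 0) := by
  classical
  set L := (PiLp.continuousLinearEquiv 2 ℝ (fun _ : Fin 3 => ℝ)).symm with hLdef
  set w : (Fin 3 → ℝ) → ℂ := fun x => u (L x) with hwdef
  have hLmp : MeasurePreserving (⇑L) (volume : Measure (Fin 3 → ℝ)) volume :=
    PiLp.volume_preserving_toLp (Fin 3)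
  have hwd : Differentiable ℝ w := hd.comp L.differentiable
  have hfw : ∀ᵐ x ∂(volume : Measure (Fin 3 → ℝ)), fderiv ℝ w x = 0 := by
    filter_upwards [hLmp.quasiMeasurePreserving.ae hf] with x hx
    have h2 : HasFDerivAt (⇑L) (L : (Fin 3 → ℝ) →L[ℝ] EuclideanSpace ℝ (Fin 3)) x :=
      L.hasFDerivAt
    have h1 : HasFDerivAt u (fderiv ℝ u (L x)) (L x) := (hd (L x)).hasFDerivAt
    have h3 : HasFDerivAt w ((fderiv ℝ u (L x)).comp
        (L : (Fin 3 → ℝ) →L[ℝ] EuclideanSpace ℝ (Fin 3))) x := h1.comp x h2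
    rw [h3.fderiv, hx, ContinuousLinearMap.zero_comp]
  have hw2 : Integrable (fun x => ‖w x‖ ^ (2:ℝ)) (volume : Measure (Fin 3 → ℝ)) := by
    have hint : Integrable (fun z => ‖u z‖ ^ (2:ℝ)) (volume : Measure (EuclideanSpace ℝ (Fin 3))) := by
      have := hu.integrable_norm_rpow (by norm_num) (by norm_num)
      simpa using this
    have hmeas : AEStronglyMeasurable (fun z => ‖u z‖ ^ (2:ℝ))
        (volume : Measure (EuclideanSpace ℝ (Fin 3))) :=
      ((hd.continuous.norm.rpow_const (fun _ => Or.inr (by norm_num))).aestronglyMeasurable)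
    exact (hLmp.integrable_comp hmeas).2 hint
  -- split off the first coordinate
  set ε := MeasurableEquiv.piFinSuccAbove (fun _ : Fin 3 => ℝ) 0 with hεdef
  have hε : MeasurePreserving (⇑ε) (volume : Measure (Fin 3 → ℝ)) volume :=
    MeasureTheory.volume_preserving_piFinSuccAbove (fun _ : Fin 3 => ℝ) 0
  have hswap : MeasurePreserving (Prod.swap : (Fin 2 → ℝ) × ℝ → ℝ × (Fin 2 → ℝ))
      (((volume : Measure (Fin 2 → ℝ))).prod (volume : Measure ℝ)) volume :=
    Measure.measurePreserving_swap
  have hF : MeasurePreserving (fun q : (Fin 2 → ℝ) × ℝ => (ε.symm (q.2, q.1) : Fin 3 → ℝ))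
      (((volume : Measure (Fin 2 → ℝ))).prod (volume : Measure ℝ)) volume :=
    (hε.symm ε).comp hswap
  have hFq : ∀ q : (Fin 2 → ℝ) × ℝ, (ε.symm (q.2, q.1) : Fin 3 → ℝ) = Fin.cons q.2 q.1 :=
    fun q => aux_symm_eq q.1 q.2
  have h_ae2 : ∀ᵐ y ∂(volume : Measure (Fin 2 → ℝ)), ∀ᵐ t ∂(volume : Measure ℝ),
      fderiv ℝ w (Fin.cons t y) = 0 := by
    have hprod : ∀ᵐ q ∂(((volume : Measure (Fin 2 → ℝ))).prod (volume : Measure ℝ)),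
        fderiv ℝ w (Fin.cons q.2 q.1) = 0 := by
      filter_upwards [hF.quasiMeasurePreserving.ae hfw] with q hq
      rwa [hFq q] at hq
    exact Measure.ae_ae_of_ae_prod (p := fun q : (Fin 2 → ℝ) × ℝ =>
      fderiv ℝ w (Fin.cons q.2 q.1) = 0) hprod
  have h_int2 : ∀ᵐ y ∂(volume : Measure (Fin 2 → ℝ)),
      Integrable (fun t => ‖w (Fin.cons t y)‖ ^ (2:ℝ)) (volume : Measure ℝ) := by
    have hmeas : AEStronglyMeasurable (fun x => ‖w x‖ ^ (2:ℝ)) (volume : Measure (Fin 3 → ℝ)) :=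
      (hwd.continuous.norm.rpow_const (fun _ => Or.inr (by norm_num))).aestronglyMeasurable
    have h := (hF.integrable_comp hmeas).2 hw2
    have h' : Integrable (fun q : (Fin 2 → ℝ) × ℝ => ‖w (Fin.cons q.2 q.1)‖ ^ (2:ℝ))
        (((volume : Measure (Fin 2 → ℝ))).prod (volume : Measure ℝ)) := by
      refine h.congr (Filter.Eventually.of_forall fun q => ?_)
      simp only [Function.comp_apply, hFq q]
    exact h'.prod_right_ae
  -- slices vanish
  have hslice : ∀ᵐ y ∂(volume : Measure (Fin 2 → ℝ)), ∀ t : ℝ, w (Fin.cons t y) = 0 := by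
    filter_upwards [h_ae2, h_int2] with y hy1 hy2
    set g : ℝ → ℂ := fun t => w (Fin.cons t y) with hgdef
    set D : ℝ → ℂ := fun s => (fderiv ℝ w (Fin.cons s y)) (Pi.single (0 : Fin 3) (1:ℝ)) with hDdef
    have hg : ∀ t : ℝ, HasDerivAt g (D t) t := by
      intro t
      have hline : HasDerivAt (fun s : ℝ => (Fin.cons s y : Fin 3 → ℝ))
          (Pi.single (0 : Fin 3) (1:ℝ)) t := by
        have heq : (fun s : ℝ => (Fin.cons s y : Fin 3 → ℝ))
            = fun s => (Fin.cons 0 y : Fin 3 → ℝ)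
                + s • (Pi.single (0 : Fin 3) (1:ℝ) : Fin 3 → ℝ) := by
          funext s; exact aux_cons_eq y s
        rw [heq]
        simpa using
          (((hasDerivAt_id t).smul_const
            ((Pi.single (0 : Fin 3) (1:ℝ)) : Fin 3 → ℝ)).const_add (Fin.cons 0 y))
      exact (hwd (Fin.cons t y)).hasFDerivAt.comp_hasDerivAt t hline
    have hD0 : D =ᵐ[(volume : Measure ℝ)] 0 := by
      filter_upwards [hy1] with s hs
      simp [hDdef, hs]
    have hconst : ∀ t : ℝ, g t = g 0 := by
      intro t
      have hint : IntervalIntegrable D volume 0 t :=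
        ((integrable_zero _ _ _).congr hD0.symm).intervalIntegrable
      have hftc := intervalIntegral.integral_eq_sub_of_hasDerivAt
        (f := g) (f' := D) (fun s _ => hg s) hint
      have hzero : (∫ s in (0:ℝ)..t, D s) = 0 := by
        rw [intervalIntegral.integral_congr_ae (g := fun _ => (0:ℂ))
          (hD0.mono fun s hs _ => hs)]
        simp
      have hsub : g t - g 0 = 0 := by rw [← hftc, hzero]
      exact sub_eq_zero.mp hsub
    have hcint : Integrable (fun _ : ℝ => ‖g 0‖ ^ (2:ℝ)) (volume : Measure ℝ) := by
      refine hy2.congr (Filter.Eventually.of_forall fun t => ?_)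
      show ‖g t‖ ^ (2:ℝ) = ‖g 0‖ ^ (2:ℝ)
      rw [hconst t]
    rcases integrable_const_iff.1 hcint with h | h
    · have hg0 : g 0 = 0 := by
        have := (Real.rpow_eq_zero_iff_of_nonneg (norm_nonneg _)).1 h
        simpa using this.1
      intro t
      rw [show w (Fin.cons t y) = g t from rfl, hconst t, hg0]
    · exfalso
      replace h := h.measure_univ_lt_top; rw [Real.volume_univ] at h
      exact (lt_irrefl _ h).elim
  -- conclude w = 0 a.e.
  have hwcont : Continuous w := hwd.continuous
  have hconsc : Continuous (fun q : (Fin 2 → ℝ) × ℝ => (Fin.cons q.2 q.1 : Fin 3 → ℝ)) := by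
    apply continuous_pi
    intro i
    refine Fin.cases ?_ (fun j => ?_) i
    · simpa using (continuous_snd : Continuous fun q : (Fin 2 → ℝ) × ℝ => q.2)
    · exact ((continuous_apply j).comp
        (continuous_fst : Continuous fun q : (Fin 2 → ℝ) × ℝ => q.1))
  have hSmeas : MeasurableSet {q : (Fin 2 → ℝ) × ℝ | w (Fin.cons q.2 q.1) ≠ 0} := by
    have : Measurable fun q : (Fin 2 → ℝ) × ℝ => w (Fin.cons q.2 q.1) :=
      (hwcont.comp hconsc).measurable
    exact this (MeasurableSet.compl (measurableSet_singleton 0))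
  have hSnull : (((volume : Measure (Fin 2 → ℝ))).prod (volume : Measure ℝ))
      {q : (Fin 2 → ℝ) × ℝ | w (Fin.cons q.2 q.1) ≠ 0} = 0 := by
    rw [Measure.measure_prod_null hSmeas]
    filter_upwards [hslice] with y hy
    have he : (Prod.mk y ⁻¹' {q : (Fin 2 → ℝ) × ℝ | w (Fin.cons q.2 q.1) ≠ 0}) = ∅ := by
      ext t; simp [hy t]
    simp [he]
  have hwnull : (volume : Measure (Fin 3 → ℝ)) {x | w x ≠ 0} = 0 := by
    have hG : MeasurePreserving (fun x : Fin 3 → ℝ => Prod.swap (ε x))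
        (volume : Measure (Fin 3 → ℝ))
        (((volume : Measure (Fin 2 → ℝ))).prod (volume : Measure ℝ)) := by
      have h1 : MeasurePreserving (Prod.swap : ℝ × (Fin 2 → ℝ) → (Fin 2 → ℝ) × ℝ)
          (volume : Measure (ℝ × (Fin 2 → ℝ)))
          (((volume : Measure (Fin 2 → ℝ))).prod (volume : Measure ℝ)) :=
        Measure.measurePreserving_swap
      exact h1.comp hε
    have hpre : (fun x : Fin 3 → ℝ => Prod.swap (ε x)) ⁻¹'
        {q : (Fin 2 → ℝ) × ℝ | w (Fin.cons q.2 q.1) ≠ 0} = {x | w x ≠ 0} := by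
      ext x
      simp only [Set.mem_preimage, Set.mem_setOf_eq, Prod.snd_swap, Prod.fst_swap]
      rw [show (Fin.cons (ε x).1 (ε x).2 : Fin 3 → ℝ) = x from by
        rw [← aux_symm_eq (ε x).2 (ε x).1]; exact ε.symm_apply_apply x]
    rw [← hpre]
    exact hG.quasiMeasurePreserving.preimage_null hSnull
  have hEmp : MeasurePreserving (⇑(WithLp.equiv 2 (Fin 3 → ℝ)))
      (volume : Measure (EuclideanSpace ℝ (Fin 3))) volume :=
    PiLp.volume_preserving_ofLp (Fin 3)
  have hunull : (volume : Measure (EuclideanSpace ℝ (Fin 3))) {z | u z ≠ 0} = 0 := by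
    have hpre : (⇑(WithLp.equiv 2 (Fin 3 → ℝ))) ⁻¹' {x : Fin 3 → ℝ | w x ≠ 0}
        = {z : EuclideanSpace ℝ (Fin 3) | u z ≠ 0} := by
      ext z
      simp only [Set.mem_preimage, Set.mem_setOf_eq, hwdef]
      rw [show L ((WithLp.equiv 2 (Fin 3 → ℝ)) z) = z from (WithLp.equiv 2 (Fin 3 → ℝ)).symm_apply_apply z]
    rw [← hpre]
    exact hEmp.quasiMeasurePreserving.preimage_null hwnull
  rw [Filter.eventuallyEq_iff_exists_mem]
  refine ⟨{z | u z = 0}, ?_, fun z hz => hz⟩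
  rw [mem_ae_iff]
  rw [show {z : EuclideanSpace ℝ (Fin 3) | u z = 0}ᶜ = {z | u z ≠ 0} from by ext z; simp]
  exact hunull

-- J as a sum of nonneg terms
lemma J_eq (ω : ℝ) (u : EuclideanSpace ℝ (Fin 3) → ℂ) :
    J ω u = (ω / 2) * (eLpNorm u 2 volume).toReal ^ 2
      + (1 / 8) * (eLpNorm u 4 volume).toReal ^ 4
      + (1 / 3) * (eLpNorm u 6 volume).toReal ^ 6 := by
  unfold J S K; ring

lemma J_nonneg (ω : ℝ) (hω : 0 < ω) (u : EuclideanSpace ℝ (Fin 3) → ℂ) : 0 ≤ J ω u := by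
  rw [J_eq]
  have h2 : (0:ℝ) ≤ (eLpNorm u 2 volume).toReal ^ 2 := by positivity
  have h4 : (0:ℝ) ≤ (eLpNorm u 4 volume).toReal ^ 4 := by positivity
  have h6 : (0:ℝ) ≤ (eLpNorm u 6 volume).toReal ^ 6 := by positivity
  have := hω.le
  positivity

lemma gradSq_pos (u : EuclideanSpace ℝ (Fin 3) → ℂ) (h1 : InH1 u)
    (h2 : ¬ u =ᵐ[(volume : Measure (EuclideanSpace ℝ (Fin 3)))] (fun _ => 0)) :
    0 < gradSq u := by
  rcases lt_or_eq_of_le (sq_nonneg ((eLpNorm (fun x => ‖fderiv ℝ u x‖) 2 volume).toReal)) with h | h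
  · exact h
  exfalso
  have htr : (eLpNorm (fun x => ‖fderiv ℝ u x‖) 2 volume).toReal = 0 := by
    have := h.symm
    nlinarith [sq_nonneg ((eLpNorm (fun x => ‖fderiv ℝ u x‖) 2 volume).toReal)]
  have hne : eLpNorm (fun x => ‖fderiv ℝ u x‖) 2 volume ≠ ⊤ := h1.2.2.1.2.ne
  have h0 : eLpNorm (fun x => ‖fderiv ℝ u x‖) 2 volume = 0 := by
    rcases ENNReal.toReal_eq_zero_iff _ |>.1 htr with h' | h'
    · exact h'
    · exact absurd h' hne
  have hae : (fun x => ‖fderiv ℝ u x‖) =ᵐ[(volume : Measure (EuclideanSpace ℝ (Fin 3)))] 0 :=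
    (eLpNorm_eq_zero_iff h1.2.2.1.1 (by norm_num)).1 h0
  have hfd : ∀ᵐ x ∂(volume : Measure (EuclideanSpace ℝ (Fin 3))), fderiv ℝ u x = 0 := by
    filter_upwards [hae] with x hx
    simpa using hx
  exact h2 (ae_zero_of_grad_zero u h1.2.1 hfd h1.1)

-- scaling
lemma eLpNorm_smul_toReal (u : EuclideanSpace ℝ (Fin 3) → ℂ) (c : ℝ) (hc : 0 ≤ c) (p : ℝ≥0∞) :
    (eLpNorm (fun x => c • u x) p volume).toReal = c * (eLpNorm u p volume).toReal := by
  have h : (fun x => c • u x) = c • u := rfl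
  rw [h, eLpNorm_const_smul, ENNReal.toReal_mul]
  congr 1
  simp [Real.norm_eq_abs, abs_of_nonneg hc]

lemma gradSq_smul (u : EuclideanSpace ℝ (Fin 3) → ℂ) (hd : Differentiable ℝ u) (c : ℝ)
    (hc : 0 ≤ c) :
    gradSq (fun x => c • u x) = c ^ 2 * gradSq u := by
  unfold gradSq
  have hfd : (fun x => ‖fderiv ℝ (fun y => c • u y) x‖)
      = c • fun x => ‖fderiv ℝ u x‖ := by
    funext x
    rw [fderiv_fun_const_smul (hd x) c]
    have hn := norm_smul c (fderiv ℝ u x)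
    rw [hn]
    simp [Real.norm_eq_abs, abs_of_nonneg hc, smul_eq_mul]
  rw [hfd, eLpNorm_const_smul, ENNReal.toReal_mul]
  have hcc : (‖c‖ₑ).toReal = c := by
    simp [Real.norm_eq_abs, abs_of_nonneg hc]
  rw [hcc]
  ring

lemma InH1_smul (u : EuclideanSpace ℝ (Fin 3) → ℂ) (h : InH1 u) (c : ℝ) (hc : 0 ≤ c) :
    InH1 (fun x => c • u x) := by
  obtain ⟨hm2, hd, hg, hm4, hm6⟩ := h
  refine ⟨hm2.const_smul c, hd.const_smul c, ?_, hm4.const_smul c, hm6.const_smul c⟩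
  have hfd : (fun x => ‖fderiv ℝ (fun y => c • u y) x‖)
      = c • fun x => ‖fderiv ℝ u x‖ := by
    funext x
    rw [fderiv_fun_const_smul (hd x) c]
    have hn := norm_smul c (fderiv ℝ u x)
    rw [hn]
    simp [Real.norm_eq_abs, abs_of_nonneg hc, smul_eq_mul]
  rw [hfd]
  exact hg.const_smul c

lemma ne_ae_smul (u : EuclideanSpace ℝ (Fin 3) → ℂ) (c : ℝ) (hc : c ≠ 0)
    (h : ¬ u =ᵐ[(volume : Measure (EuclideanSpace ℝ (Fin 3)))] (fun _ => 0)) :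
    ¬ (fun x => c • u x) =ᵐ[(volume : Measure (EuclideanSpace ℝ (Fin 3)))] (fun _ => 0) := by
  intro hv
  apply h
  filter_upwards [hv] with x hx
  have : c • u x = 0 := hx
  rcases smul_eq_zero.1 this with h' | h'
  · exact absurd h' hc
  · exact h'



lemma K_smul (u : EuclideanSpace ℝ (Fin 3) → ℂ) (hd : Differentiable ℝ u) (c : ℝ) (hc : 0 ≤ c) :
    K (fun x => c • u x)
      = c ^ 2 * gradSq u - (3 / 4) * c ^ 4 * (eLpNorm u 4 volume).toReal ^ 4
        - c ^ 6 * (eLpNorm u 6 volume).toReal ^ 6 := by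
  unfold K
  rw [gradSq_smul u hd c hc, eLpNorm_smul_toReal u c hc 4, eLpNorm_smul_toReal u c hc 6]
  ring

lemma J_smul (ω : ℝ) (u : EuclideanSpace ℝ (Fin 3) → ℂ) (hd : Differentiable ℝ u) (c : ℝ)
    (hc : 0 ≤ c) :
    J ω (fun x => c • u x)
      = (ω / 2) * c ^ 2 * (eLpNorm u 2 volume).toReal ^ 2
        + (1 / 8) * c ^ 4 * (eLpNorm u 4 volume).toReal ^ 4
        + (1 / 3) * c ^ 6 * (eLpNorm u 6 volume).toReal ^ 6 := by
  rw [J_eq]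
  rw [eLpNorm_smul_toReal u c hc 2, eLpNorm_smul_toReal u c hc 4, eLpNorm_smul_toReal u c hc 6]
  ring

-- downscaling to the Nehari-type constraint
lemma scale_to_K0 (ω : ℝ) (hω : 0 < ω) (u : EuclideanSpace ℝ (Fin 3) → ℂ)
    (h1 : InH1 u) (h2 : ¬ u =ᵐ[(volume : Measure (EuclideanSpace ℝ (Fin 3)))] (fun _ => 0))
    (h3 : K u ≤ 0) :
    ∃ v, (InH1 v ∧ ¬ v =ᵐ[(volume : Measure (EuclideanSpace ℝ (Fin 3)))] (fun _ => 0) ∧ K v = 0)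
      ∧ J ω v ≤ J ω u := by
  rcases eq_or_lt_of_le h3 with h0 | h0
  · exact ⟨u, ⟨h1, h2, h0⟩, le_refl _⟩
  · set g := gradSq u with hg
    set a := (eLpNorm u 4 volume).toReal ^ 4 with ha
    set b := (eLpNorm u 6 volume).toReal ^ 6 with hb
    have hgpos : 0 < g := gradSq_pos u h1 h2
    set h : ℝ → ℝ := fun t => g - (3 / 4) * t * a - t ^ 2 * b with hh
    have hcont : ContinuousOn h (Set.Icc 0 1) := by fun_prop
    have hh0 : h 0 = g := by simp [hh]
    have hh1 : h 1 < 0 := by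
      have : h 1 = K u := by unfold h; unfold K; ring
      rw [this]; exact h0
    have hmem : (0:ℝ) ∈ Set.Ioo (h 1) (h 0) := ⟨hh1, by rw [hh0]; exact hgpos⟩
    obtain ⟨t, ht, hht⟩ := intermediate_value_Ioo' (by norm_num : (0:ℝ) ≤ 1) hcont hmem
    set c := Real.sqrt t with hc
    have ht0 : 0 < t := ht.1
    have ht1 : t < 1 := ht.2
    have hc0 : 0 < c := Real.sqrt_pos.2 ht0
    have hc1 : c < 1 := by
      rw [hc, show (1:ℝ) = Real.sqrt 1 from (Real.sqrt_one).symm]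
      exact Real.sqrt_lt_sqrt ht0.le ht1
    have hcsq : c ^ 2 = t := Real.sq_sqrt ht0.le
    refine ⟨fun x => c • u x, ⟨InH1_smul u h1 c hc0.le, ne_ae_smul u c hc0.ne' h2, ?_⟩, ?_⟩
    · rw [K_smul u h1.2.1 c hc0.le]
      have hzero : g - (3 / 4) * c ^ 2 * a - (c ^ 2) ^ 2 * b = 0 := by
        rw [hcsq]
        have : h t = 0 := hht
        rw [hh] at this
        linarith [this]
      have hrw : c ^ 2 * gradSq u - 3 / 4 * c ^ 4 * (eLpNorm u 4 volume).toReal ^ 4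
          - c ^ 6 * (eLpNorm u 6 volume).toReal ^ 6
          = c ^ 2 * (g - (3 / 4) * c ^ 2 * a - (c ^ 2) ^ 2 * b) := by
        rw [hg, ha, hb]; ring
      rw [hrw, hzero, mul_zero]
    · rw [J_smul ω u h1.2.1 c hc0.le, J_eq]
      have h2n : (0:ℝ) ≤ (eLpNorm u 2 volume).toReal ^ 2 := by positivity
      have h4n : (0:ℝ) ≤ a := by rw [ha]; positivity
      have h6n : (0:ℝ) ≤ b := by rw [hb]; positivity
      have hc2 : c ^ 2 ≤ 1 := by nlinarith
      have hc4 : c ^ 4 ≤ 1 := by nlinarith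
      have hc6 : c ^ 6 ≤ 1 := by nlinarith
      have hω2 : 0 < ω / 2 := by linarith
      nlinarith [mul_le_of_le_one_left h2n hc2, mul_le_of_le_one_left h4n hc4,
        mul_le_of_le_one_left h6n hc6,
        mul_le_mul_of_nonneg_left (mul_le_of_le_one_left h2n hc2) hω2.le]



lemma exists_K0 :
    ∃ u : EuclideanSpace ℝ (Fin 3) → ℂ, InH1 u ∧
      ¬ u =ᵐ[(volume : Measure (EuclideanSpace ℝ (Fin 3)))] (fun _ => 0) ∧ K u = 0 := by
  classical
  set E := EuclideanSpace ℝ (Fin 3)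
  have f : ContDiffBump (0 : E) := ⟨1, 2, one_pos, one_lt_two⟩
  set ψ : E → ℂ := fun x => (f x : ℂ) with hψ
  have hf0 : ContDiff ℝ (⊤ : ℕ∞) (fun x : E => f x) := f.contDiff
  have hsmooth : ContDiff ℝ (⊤ : ℕ∞) ψ := Complex.ofRealCLM.contDiff.comp hf0
  have hdiff : Differentiable ℝ ψ := hsmooth.differentiable (by simp)
  have hcs : HasCompactSupport ψ := by
    have := f.hasCompactSupport
    exact this.comp_left (g := fun r : ℝ => (r : ℂ)) (by simp)
  have hcont : Continuous ψ := hsmooth.continuous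
  have hmem : ∀ p : ℝ≥0∞, MemLp ψ p volume := fun p =>
    hcont.memLp_of_hasCompactSupport (μ := volume) (p := p) hcs
  have hfcs : HasCompactSupport (fun x => ‖fderiv ℝ ψ x‖) := (hcs.fderiv ℝ).norm
  have hfcont : Continuous (fun x => ‖fderiv ℝ ψ x‖) :=
    (hsmooth.continuous_fderiv (by simp)).norm
  have hgmem : MemLp (fun x => ‖fderiv ℝ ψ x‖) 2 volume :=
    hfcont.memLp_of_hasCompactSupport (μ := volume) (p := 2) hfcs
  have hInH1 : InH1 ψ := ⟨hmem 2, hdiff, hgmem, hmem 4, hmem 6⟩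
  have hne : ¬ ψ =ᵐ[(volume : Measure E)] (fun _ => 0) := by
    intro hae
    have hsub : Metric.ball (0 : E) f.rOut ⊆ {x : E | ψ x ≠ 0} := by
      intro x hx
      have hpos := f.pos_of_mem_ball hx
      simp only [Set.mem_setOf_eq, hψ]
      exact_mod_cast ne_of_gt (by exact_mod_cast hpos)
    have hnull : (volume : Measure E) {x : E | ψ x ≠ 0} = 0 := by
      have := hae
      rw [Filter.EventuallyEq, ae_iff] at this
      simpa using this
    have := measure_mono_null hsub hnull
    have hpos := Metric.measure_ball_pos (volume : Measure E) (0 : E) f.rOut_pos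
    rw [this] at hpos
    exact lt_irrefl _ hpos
  -- scale to K = 0
  set g := gradSq ψ with hgdef
  set a := (eLpNorm ψ 4 volume).toReal ^ 4 with hadef
  set b := (eLpNorm ψ 6 volume).toReal ^ 6 with hbdef
  have hgpos : 0 < g := gradSq_pos ψ hInH1 hne
  have hapos : 0 < a := by
    have hne4 : eLpNorm ψ 4 volume ≠ 0 := by
      intro h0
      exact hne ((eLpNorm_eq_zero_iff (hmem 4).1 (by norm_num)).1 h0)
    have hfin : eLpNorm ψ 4 volume ≠ ⊤ := (hmem 4).2.ne
    have : 0 < (eLpNorm ψ 4 volume).toReal := ENNReal.toReal_pos hne4 hfin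
    rw [hadef]; positivity
  have hbnn : 0 ≤ b := by rw [hbdef]; positivity
  set T : ℝ := (8 * g) / (3 * a) with hT
  have hTpos : 0 < T := by rw [hT]; positivity
  set h : ℝ → ℝ := fun t => g - (3 / 4) * t * a - t ^ 2 * b with hh
  have hcont' : ContinuousOn h (Set.Icc 0 T) := by fun_prop
  have hhT : h T < 0 := by
    have h34 : (3 / 4) * T * a = 2 * g := by
      rw [hT]; field_simp; ring
    have : h T = g - 2 * g - T ^ 2 * b := by rw [hh]; simp only []; rw [h34]
    rw [this]
    nlinarith [sq_nonneg T, mul_nonneg (sq_nonneg T) hbnn]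
  have hmem0 : (0:ℝ) ∈ Set.Ioo (h T) (h 0) := by
    constructor
    · exact hhT
    · simp [hh]; exact hgpos
  obtain ⟨t, ht, hht⟩ := intermediate_value_Ioo' hTpos.le hcont' hmem0
  set c := Real.sqrt t with hcdef
  have ht0 : 0 < t := ht.1
  have hc0 : 0 < c := Real.sqrt_pos.2 ht0
  have hcsq : c ^ 2 = t := Real.sq_sqrt ht0.le
  refine ⟨fun x => c • ψ x, InH1_smul ψ hInH1 c hc0.le, ne_ae_smul ψ c hc0.ne' hne, ?_⟩
  rw [K_smul ψ hdiff c hc0.le]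
  have hzero : g - (3 / 4) * c ^ 2 * a - (c ^ 2) ^ 2 * b = 0 := by
    rw [hcsq]
    have : h t = 0 := hht
    rw [hh] at this
    linarith [this]
  have hrw : c ^ 2 * gradSq ψ - 3 / 4 * c ^ 4 * (eLpNorm ψ 4 volume).toReal ^ 4
      - c ^ 6 * (eLpNorm ψ 6 volume).toReal ^ 6
      = c ^ 2 * (g - (3 / 4) * c ^ 2 * a - (c ^ 2) ^ 2 * b) := by
    rw [hgdef, hadef, hbdef]; ring
  rw [hrw, hzero, mul_zero]

/-- The constrained minimization problems coincide:
`inf {S_ω(u) : u ∈ H¹ \ {0}, K(u) = 0} = inf {J_ω(u) : u ∈ H¹ \ {0}, K(u) ≤ 0}`. -/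
theorem stmt_6 (ω : ℝ) (hω : 0 < ω) :
    sInf ((fun u => S ω u) ''
        {u : EuclideanSpace ℝ (Fin 3) → ℂ | InH1 u ∧
          ¬ u =ᵐ[(volume : Measure (EuclideanSpace ℝ (Fin 3)))] (fun _ => 0) ∧
          K u = 0})
      = sInf ((fun u => J ω u) ''
        {u : EuclideanSpace ℝ (Fin 3) → ℂ | InH1 u ∧
          ¬ u =ᵐ[(volume : Measure (EuclideanSpace ℝ (Fin 3)))] (fun _ => 0) ∧
          K u ≤ 0}) := by
  set SetA := {u : EuclideanSpace ℝ (Fin 3) → ℂ | InH1 u ∧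
      ¬ u =ᵐ[(volume : Measure (EuclideanSpace ℝ (Fin 3)))] (fun _ => 0) ∧ K u = 0} with hSetA
  set SetB := {u : EuclideanSpace ℝ (Fin 3) → ℂ | InH1 u ∧
      ¬ u =ᵐ[(volume : Measure (EuclideanSpace ℝ (Fin 3)))] (fun _ => 0) ∧ K u ≤ 0} with hSetB
  set A := (fun u => S ω u) '' SetA with hA
  set B := (fun u => J ω u) '' SetB with hB
  have hJS : ∀ u ∈ SetA, S ω u = J ω u := by
    intro u hu
    unfold J
    rw [hu.2.2]
    ring
  have hAB : A ⊆ B := by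
    rintro x ⟨u, hu, rfl⟩
    exact ⟨u, ⟨hu.1, hu.2.1, le_of_eq hu.2.2⟩, (hJS u hu).symm⟩
  have hAne : A.Nonempty := by
    obtain ⟨u, h1, h2, h3⟩ := exists_K0
    exact ⟨S ω u, u, ⟨h1, h2, h3⟩, rfl⟩
  have hBne : B.Nonempty := hAne.mono hAB
  have hBbd : BddBelow B := by
    refine ⟨0, ?_⟩
    rintro x ⟨u, hu, rfl⟩
    exact J_nonneg ω hω u
  have hAbd : BddBelow A := hBbd.mono hAB
  apply le_antisymm
  · apply le_csInf hBne
    rintro x ⟨u, hu, rfl⟩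
    obtain ⟨v, hv, hle⟩ := scale_to_K0 ω hω u hu.1 hu.2.1 hu.2.2
    calc sInf A ≤ S ω v := csInf_le hAbd ⟨v, hv, rfl⟩
      _ = J ω v := hJS v hv
      _ ≤ J ω u := hle
  · exact csInf_le_csInf hBbd hAne hAB

end
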